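/- The square roots of the squarefree positive integers are linearly independent over $\mathbb{Q}$: if $m_1 < m_2 < \cdots < m_k$ are distinct squarefree positive integers and $q_1, \ldots, q_k \in \mathbb{Q}$ satisfy $\sum_{i=1}^k q_i \sqrt{m_i} = 0$, then $q_1 = \cdots = q_k = 0$. -/
import Mathlib


noncomputable def adjQ (F : Subfield ℝ) (α : ℝ) (hα : α ∉ F) (hα2 : α ^ 2 ∈ F) : Subfield ℝ where
  carrier := {x | ∃ a ∈ F, ∃ b ∈ F, x = a + b * α}
  zero_mem' := ⟨0, zero_mem F, 0, zero_mem F, by ring⟩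
  one_mem' := ⟨1, one_mem F, 0, zero_mem F, by ring⟩
  add_mem' := by
    rintro x y ⟨a, ha, b, hb, rfl⟩ ⟨c, hc, d, hd, rfl⟩
    exact ⟨a + c, add_mem ha hc, b + d, add_mem hb hd, by ring⟩
  neg_mem' := by
    rintro x ⟨a, ha, b, hb, rfl⟩
    exact ⟨-a, neg_mem ha, -b, neg_mem hb, by ring⟩
  mul_mem' := by
    rintro x y ⟨a, ha, b, hb, rfl⟩ ⟨c, hc, d, hd, rfl⟩
    exact ⟨a * c + b * d * α ^ 2, add_mem (mul_mem ha hc) (mul_mem (mul_mem hb hd) hα2),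
      a * d + b * c, add_mem (mul_mem ha hd) (mul_mem hb hc), by ring⟩
  inv_mem' := by
    rintro x ⟨a, ha, b, hb, rfl⟩
    by_cases hd : a ^ 2 - b ^ 2 * α ^ 2 = 0
    · by_cases hb0 : b = 0
      · subst hb0
        have ha0 : a = 0 := by nlinarith
        subst ha0
        exact ⟨0, zero_mem F, 0, zero_mem F, by simp⟩
      · exfalso
        have : (α - a / b) * (α + a / b) = 0 := by
          field_simp
          nlinarith [hd]
        rcases mul_eq_zero.mp this with h | h
        · exact hα (by have : α = a / b := by linarith
                       rw [this]; exact div_mem ha hb)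
        · exact hα (by have : α = -(a / b) := by linarith
                       rw [this]; exact neg_mem (div_mem ha hb))
    · refine ⟨a / (a ^ 2 - b ^ 2 * α ^ 2), div_mem ha (sub_mem (pow_mem ha 2) (mul_mem (pow_mem hb 2) hα2)),
        -(b / (a ^ 2 - b ^ 2 * α ^ 2)), neg_mem (div_mem hb (sub_mem (pow_mem ha 2) (mul_mem (pow_mem hb 2) hα2))), ?_⟩
      rw [inv_eq_of_mul_eq_one_right]
      field_simp
      ring

theorem mem_adjoin_sqrt {F : Subfield ℝ} {α : ℝ} (hα : α ∉ F) (hα2 : α ^ 2 ∈ F) {x : ℝ}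
    (hx : x ∈ Subfield.closure (insert α (F : Set ℝ))) :
    ∃ a ∈ F, ∃ b ∈ F, x = a + b * α := by
  have h : Subfield.closure (insert α (F : Set ℝ)) ≤ adjQ F α hα hα2 := by
    rw [Subfield.closure_le]
    rintro y (rfl | hy)
    · exact ⟨0, zero_mem F, 1, one_mem F, by ring⟩
    · exact ⟨y, hy, 0, zero_mem F, by ring⟩
  exact h hx

noncomputable def Kf (S : Finset ℕ) : Subfield ℝ :=
  Subfield.closure ((fun p : ℕ => Real.sqrt p) '' ↑S)

theorem sqrt_mem_Kf (S : Finset ℕ) : ∀ d : ℕ, Squarefree d →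
    (∀ p : ℕ, p.Prime → p ∣ d → p ∈ S) → Real.sqrt d ∈ Kf S := by
  intro d
  induction d using Nat.strong_induction_on with
  | _ d ih =>
    intro hd hS
    rcases eq_or_ne d 1 with rfl | hd1
    · simp [Kf, Subfield.one_mem]
    · have hd0 : d ≠ 0 := hd.ne_zero
      have hp : d.minFac.Prime := Nat.minFac_prime hd1
      have hpd : d.minFac ∣ d := Nat.minFac_dvd d
      have h2 : 2 ≤ d.minFac := hp.two_le
      have hlt : d / d.minFac < d := Nat.div_lt_self (Nat.pos_of_ne_zero hd0) hp.one_lt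
      have hdvd : d / d.minFac ∣ d := Nat.div_dvd_of_dvd hpd
      have heq : d = d.minFac * (d / d.minFac) := (Nat.mul_div_cancel' hpd).symm
      have h1 : Real.sqrt d.minFac ∈ Kf S :=
        Subfield.subset_closure ⟨d.minFac, by exact_mod_cast hS d.minFac hp hpd, rfl⟩
      have h2' : Real.sqrt (d / d.minFac : ℕ) ∈ Kf S :=
        ih _ hlt (hd.squarefree_of_dvd hdvd)
          (fun p hp' hpd' => hS p hp' (hpd'.trans hdvd))
      have : Real.sqrt d = Real.sqrt d.minFac * Real.sqrt (d / d.minFac : ℕ) := by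
        rw [← Real.sqrt_mul (by positivity)]
        congr 1
        rw [← Nat.cast_mul, ← heq]
      rw [this]
      exact mul_mem h1 h2'

theorem sqrt_notMem_Kf : ∀ (S : Finset ℕ), (∀ p ∈ S, p.Prime) →
    ∀ m r : ℕ, Squarefree m → r.Prime → r ∣ m → r ∉ S → Real.sqrt m ∉ Kf S := by
  intro S
  induction S using Finset.induction_on with
  | empty =>
    intro _ m r hm hr hrm hrS hmem
    have hirr : Irrational (Real.sqrt m) := by
      rw [irrational_sqrt_natCast_iff]
      rintro ⟨t, ht⟩
      have : r * r ∣ m := by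
        rw [ht]
        exact mul_dvd_mul (hr.dvd_of_dvd_pow (n := 2) (by rw [pow_two, ← ht]; exact hrm))
          (hr.dvd_of_dvd_pow (n := 2) (by rw [pow_two, ← ht]; exact hrm))
      exact hr.not_isUnit (hm r this)
    have : Kf (∅ : Finset ℕ) ≤ (Rat.castHom ℝ).fieldRange := by
      rw [Kf, Subfield.closure_le]
      simp
    rcases RingHom.mem_fieldRange.mp (this hmem) with ⟨s, hs⟩
    exact hirr ⟨s, hs⟩
  | @insert q S hq ih =>
    intro hS m r hm hr hrm hrS hmem
    have hSprime : ∀ p ∈ S, p.Prime := fun p hp => hS p (Finset.mem_insert_of_mem hp)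
    have hqprime : q.Prime := hS q (Finset.mem_insert_self q S)
    have hqK : Real.sqrt q ∉ Kf S :=
      ih hSprime q q hqprime.squarefree hqprime dvd_rfl hq
    have hq2 : (Real.sqrt q) ^ 2 ∈ Kf S := by
      rw [Real.sq_sqrt (by positivity)]
      exact natCast_mem (Kf S) q
    have hmem' : Real.sqrt m ∈ Subfield.closure (insert (Real.sqrt q) ((Kf S : Set ℝ))) := by
      refine Subfield.closure_mono (s := (fun p : ℕ => Real.sqrt p) '' ↑(insert q S)) ?_ hmem
      rw [Finset.coe_insert, Set.image_insert_eq]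
      exact Set.insert_subset_insert (fun x ⟨p, hp, hx⟩ =>
        hx ▸ Subfield.subset_closure ⟨p, hp, rfl⟩)
    obtain ⟨a, ha, b, hb, hab⟩ := mem_adjoin_sqrt hqK hq2 hmem'
    have hrS' : r ∉ S := fun h => hrS (Finset.mem_insert_of_mem h)
    have hrq : r ≠ q := fun h => hrS (h ▸ Finset.mem_insert_self q S)
    have hsq : (m : ℝ) = a ^ 2 + b ^ 2 * q + 2 * a * b * Real.sqrt q := by
      have h1 : ((m : ℕ) : ℝ) = (a + b * Real.sqrt q) ^ 2 := by
        rw [← hab, Real.sq_sqrt (by positivity)]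
      have h2 : (Real.sqrt q) ^ 2 = (q : ℝ) := Real.sq_sqrt (by positivity)
      nlinarith [h1, h2]
    by_cases hb0 : b = 0
    · subst hb0
      rw [zero_mul, add_zero] at hab
      exact ih hSprime m r hm hr hrm hrS' (hab ▸ ha)
    by_cases ha0 : a = 0
    · subst ha0
      rw [zero_add] at hab
      by_cases hqm : q ∣ m
      · have hmeq : m = q * (m / q) := (Nat.mul_div_cancel' hqm).symm
        have hsplit : Real.sqrt m = Real.sqrt q * Real.sqrt (m / q : ℕ) := by
          rw [← Real.sqrt_mul (by positivity)]
          congr 1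
          rw [← Nat.cast_mul, ← hmeq]
        have hsqrtq_ne : Real.sqrt q ≠ 0 :=
          ne_of_gt (Real.sqrt_pos.mpr (by exact_mod_cast hqprime.pos))
        have hb' : Real.sqrt (m / q : ℕ) = b := by
          have : Real.sqrt q * Real.sqrt (m / q : ℕ) = Real.sqrt q * b := by
            rw [← hsplit, hab, mul_comm]
          exact mul_left_cancel₀ hsqrtq_ne this
        have hrm' : r ∣ m / q := by
          rcases (Nat.Prime.dvd_mul hr).mp (hmeq ▸ hrm) with h | h
          · exact absurd ((Nat.prime_dvd_prime_iff_eq hr hqprime).mp h) hrq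
          · exact h
        exact ih hSprime (m / q) r (hm.squarefree_of_dvd (Nat.div_dvd_of_dvd hqm)) hr hrm'
          hrS' (hb' ▸ hb)
      · have hcop : Nat.Coprime m q :=
          Nat.Coprime.symm ((hqprime.coprime_iff_not_dvd).mpr hqm)
        have hsfmq : Squarefree (m * q) :=
          (Nat.squarefree_mul hcop).mpr ⟨hm, hqprime.squarefree⟩
        have hsplit : Real.sqrt (m * q : ℕ) = b * q := by
          push_cast
          rw [Real.sqrt_mul (by positivity), hab]
          have h2 : Real.sqrt q * Real.sqrt q = (q : ℝ) := Real.mul_self_sqrt (by positivity)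
          rw [mul_assoc, h2]
        exact ih hSprime (m * q) r hsfmq hr (Dvd.dvd.mul_right hrm q) hrS'
          (hsplit ▸ mul_mem hb (natCast_mem (Kf S) q))
    · -- a ≠ 0, b ≠ 0 : sqrt q ∈ Kf S, contradiction
      have hd : Real.sqrt q = ((m : ℝ) - a ^ 2 - b ^ 2 * q) / (2 * a * b) := by
        field_simp
        nlinarith [hsq]
      apply hqK
      rw [hd]
      exact div_mem (sub_mem (sub_mem (natCast_mem (Kf S) m) (pow_mem ha 2))
        (mul_mem (pow_mem hb 2) (natCast_mem (Kf S) q)))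
        (mul_mem (mul_mem (by exact_mod_cast natCast_mem (Kf S) 2) ha) hb)

theorem indep_Kf : ∀ (S : Finset ℕ), (∀ p ∈ S, p.Prime) →
    ∀ (T : Finset ℕ) (c : ℕ → ℚ),
    (∀ d ∈ T, Squarefree d ∧ ∀ p : ℕ, p.Prime → p ∣ d → p ∈ S) →
    ∑ d ∈ T, (c d : ℝ) * Real.sqrt d = 0 → ∀ d ∈ T, c d = 0 := by
  intro S
  induction S using Finset.induction_on with
  | empty =>
    intro _ T c hT hsum d hd
    have hT1 : ∀ e ∈ T, e = 1 := by
      intro e he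
      by_contra he1
      have hp := Nat.minFac_prime he1
      exact absurd ((hT e he).2 e.minFac hp (Nat.minFac_dvd e)) (Finset.notMem_empty _)
    have hTeq : T = {1} := Finset.eq_singleton_iff_unique_mem.mpr ⟨hT1 d hd ▸ hd, hT1⟩
    rw [hT1 d hd]
    rw [hTeq, Finset.sum_singleton] at hsum
    simpa using hsum
  | @insert q S hq ih =>
    intro hS T c hT hsum
    have hSprime : ∀ p ∈ S, p.Prime := fun p hp => hS p (Finset.mem_insert_of_mem hp)
    have hqprime : q.Prime := hS q (Finset.mem_insert_self q S)
    set T₀ := T.filter (fun d => ¬ q ∣ d) with hT₀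
    set T₁ := T.filter (fun d => q ∣ d) with hT₁
    set A := ∑ d ∈ T₀, (c d : ℝ) * Real.sqrt d with hA
    set B := ∑ d ∈ T₁, (c d : ℝ) * Real.sqrt (d / q : ℕ) with hB
    -- facts about members of T₀ / T₁
    have hmemT₀ : ∀ d ∈ T₀, Squarefree d ∧ ∀ p : ℕ, p.Prime → p ∣ d → p ∈ S := by
      intro d hd
      have hd' := Finset.mem_filter.mp hd
      refine ⟨(hT d hd'.1).1, fun p hp hpd => ?_⟩
      rcases Finset.mem_insert.mp ((hT d hd'.1).2 p hp hpd) with rfl | h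
      · exact absurd hpd hd'.2
      · exact h
    have hmemT₁ : ∀ d ∈ T₁, Squarefree (d / q) ∧
        ∀ p : ℕ, p.Prime → p ∣ d / q → p ∈ S := by
      intro d hd
      have hd' := Finset.mem_filter.mp hd
      have hdq : q * (d / q) = d := Nat.mul_div_cancel' hd'.2
      have hdvd : d / q ∣ d := Nat.div_dvd_of_dvd hd'.2
      have hsf : Squarefree (d / q) := (hT d hd'.1).1.squarefree_of_dvd hdvd
      refine ⟨hsf, fun p hp hpd => ?_⟩
      rcases Finset.mem_insert.mp ((hT d hd'.1).2 p hp (hpd.trans hdvd)) with rfl | h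
      · exact absurd ((hT d hd'.1).1 p (hdq ▸ mul_dvd_mul_left p hpd)) hp.not_isUnit
      · exact h
    have hsum' : A + Real.sqrt q * B = 0 := by
      rw [← hsum, hA, hB, Finset.mul_sum]
      rw [← Finset.sum_filter_add_sum_filter_not T (fun d => q ∣ d)]
      rw [add_comm]
      congr 1
      apply Finset.sum_congr rfl
      intro d hd
      have hd' := Finset.mem_filter.mp hd
      have hdq : q * (d / q) = d := Nat.mul_div_cancel' hd'.2
      have : Real.sqrt d = Real.sqrt q * Real.sqrt (d / q : ℕ) := by
        rw [← Real.sqrt_mul (by positivity), ← Nat.cast_mul, hdq]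
      rw [this]; ring
    have hAmem : A ∈ Kf S := by
      apply Subfield.sum_mem
      intro d hd
      exact mul_mem (SubfieldClass.ratCast_mem (Kf S) (c d))
        (sqrt_mem_Kf S d (hmemT₀ d hd).1 (hmemT₀ d hd).2)
    have hBmem : B ∈ Kf S := by
      apply Subfield.sum_mem
      intro d hd
      exact mul_mem (SubfieldClass.ratCast_mem (Kf S) (c d))
        (sqrt_mem_Kf S (d / q) (hmemT₁ d hd).1 (hmemT₁ d hd).2)
    have hB0 : B = 0 := by
      by_contra hB0
      apply sqrt_notMem_Kf S hSprime q q hqprime.squarefree hqprime dvd_rfl hq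
      have : Real.sqrt q = -A / B := by
        field_simp
        linarith [hsum']
      rw [this]
      exact div_mem (neg_mem hAmem) hBmem
    have hA0 : A = 0 := by
      rw [hB0, mul_zero, add_zero] at hsum'
      exact hsum'
    have hc₀ : ∀ d ∈ T₀, c d = 0 := ih hSprime T₀ c hmemT₀ (by rw [← hA]; exact hA0)
    have hc₁ : ∀ d ∈ T₁, c d = 0 := by
      intro d hd
      have hd' := Finset.mem_filter.mp hd
      have hdq : ∀ e ∈ T₁, q * (e / q) = e := fun e he =>
        Nat.mul_div_cancel' (Finset.mem_filter.mp he).2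
      have hinj : ∀ e₁ ∈ T₁, ∀ e₂ ∈ T₁, e₁ / q = e₂ / q → e₁ = e₂ := by
        intro e₁ h₁ e₂ h₂ h
        rw [← hdq e₁ h₁, ← hdq e₂ h₂, h]
      have hsum₁ : ∑ e ∈ T₁.image (· / q), ((fun e => c (q * e)) e : ℝ) * Real.sqrt e = B := by
        rw [Finset.sum_image hinj]
        apply Finset.sum_congr rfl
        intro e he
        simp only [hdq e he]
      have := ih hSprime (T₁.image (· / q)) (fun e => c (q * e))
        (by
          rintro e he
          obtain ⟨d', hd', rfl⟩ := Finset.mem_image.mp he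
          exact hmemT₁ d' hd')
        (by rw [hsum₁, hB0]) (d / q) (Finset.mem_image_of_mem _ hd)
      simpa [hdq d hd] using this
    intro d hd
    by_cases hqd : q ∣ d
    · exact hc₁ d (Finset.mem_filter.mpr ⟨hd, hqd⟩)
    · exact hc₀ d (Finset.mem_filter.mpr ⟨hd, hqd⟩)

open scoped BigOperators

theorem stmt_2 (k : ℕ) (m : Fin k → ℕ) (hmono : StrictMono m)
    (hsf : ∀ i, Squarefree (m i)) (hpos : ∀ i, 0 < m i)
    (q : Fin k → ℚ)
    (hsum : ∑ i, (q i : ℝ) * Real.sqrt (m i) = 0) :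
    ∀ i, q i = 0 := by
  classical
  set S : Finset ℕ := Finset.univ.biUnion (fun i => (m i).primeFactors) with hSdef
  have hS : ∀ p ∈ S, p.Prime := by
    intro p hp
    obtain ⟨i, _, hpi⟩ := Finset.mem_biUnion.mp hp
    exact Nat.prime_of_mem_primeFactors hpi
  have hinj : Function.Injective m := hmono.injective
  set c : ℕ → ℚ := fun n => if h : ∃ i, m i = n then q h.choose else 0 with hc
  have hcm : ∀ i, c (m i) = q i := by
    intro i
    have h : ∃ j, m j = m i := ⟨i, rfl⟩
    simp only [hc, dif_pos h]
    congr 1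
    exact hinj h.choose_spec
  have hcond : ∀ d ∈ Finset.univ.image m,
      Squarefree d ∧ ∀ p : ℕ, p.Prime → p ∣ d → p ∈ S := by
    intro d hd
    obtain ⟨i, _, rfl⟩ := Finset.mem_image.mp hd
    refine ⟨hsf i, fun p hp hpd => ?_⟩
    exact Finset.mem_biUnion.mpr ⟨i, Finset.mem_univ i,
      Nat.mem_primeFactors.mpr ⟨hp, hpd, (hpos i).ne'⟩⟩
  have hsum' : ∑ d ∈ Finset.univ.image m, (c d : ℝ) * Real.sqrt d = 0 := by
    rw [Finset.sum_image (fun a _ b _ h => hinj h), ← hsum]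
    exact Finset.sum_congr rfl fun i _ => by rw [hcm i]
  have hfin := indep_Kf S hS (Finset.univ.image m) c hcond hsum'
  intro i
  have := hfin (m i) (Finset.mem_image_of_mem m (Finset.mem_univ i))
  rwa [hcm i] at this
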